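/- Let A be a commutative Artinian local ring with maximal ideal 𝔪 and residue field F, let n = n₁ + ⋯ + n_r be a partition of n into positive integers, and let g ∈ GL_n(A) be block diagonal with diagonal blocks g₁, …, g_r. Assume that the characteristic polynomials of the reductions ḡ₁, …, ḡ_r ∈ GL_{n_i}(F) are pairwise coprime in F[X], and let q be a positive integer such that for each i the characteristic polynomial of ḡ_i^q equals the characteristic polynomial of ḡ_i. Then every h ∈ GL_n(A) satisfying h g h⁻¹ = g^q is block diagonal. -/

import Mathlib

open IsLocalRing Polynomial Matrix

private theorem aux_pow_comm' {R : Type*} [CommRing R] {m k : ℕ}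
    (X : Matrix (Fin m) (Fin k) R) (B : Matrix (Fin k) (Fin k) R)
    (A' : Matrix (Fin m) (Fin m) R) (hXB : X * B = A' * X) :
    ∀ p : R[X], X * aeval B p = aeval A' p * X := by
  have hpow : ∀ d : ℕ, X * B ^ d = A' ^ d * X := by
    intro d
    induction d with
    | zero => simp
    | succ d ih =>
      rw [pow_succ, pow_succ, ← Matrix.mul_assoc, ih, Matrix.mul_assoc, hXB,
        ← Matrix.mul_assoc]
  intro p
  induction p using Polynomial.induction_on' with
  | add p q hp hq => simp [map_add, Matrix.mul_add, Matrix.add_mul, hp, hq]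
  | monomial d c =>
    simp only [aeval_monomial, ← Algebra.smul_def, Matrix.mul_smul,
      Matrix.smul_mul, hpow]

private theorem aux_isUnit' {F : Type*} [Field F] {m : ℕ}
    (M : Matrix (Fin m) (Fin m) F) (p : F[X]) (hco : IsCoprime M.charpoly p) :
    IsUnit (aeval M p) := by
  obtain ⟨u, v, huv⟩ := hco
  have h1 : aeval M v * aeval M p = 1 := by
    have := congrArg (aeval M) huv
    simpa only [map_add, _root_.map_mul, _root_.map_one, Matrix.aeval_self_charpoly,
      mul_zero, zero_add] using this
  have h2 : aeval M p * aeval M v = 1 := by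
    rw [← _root_.map_mul, mul_comm p v, _root_.map_mul, h1]
  exact ⟨⟨aeval M p, aeval M v, h2, h1⟩, rfl⟩

private theorem aux_map_aeval' {R S : Type*} [CommRing R] [CommRing S] (f : R →+* S)
    {k : ℕ} (M : Matrix (Fin k) (Fin k) R) (p : R[X]) :
    f.mapMatrix (aeval M p) = aeval (f.mapMatrix M) (p.map f) := by
  apply Polynomial.map_aeval_eq_aeval_map
  ext a i j
  simp [Matrix.algebraMap_matrix_apply, apply_ite f]


/-- Over an Artinian local ring, if `g` is block diagonal with blocks whose reductions have
pairwise coprime characteristic polynomials, each invariant under taking `q`-th powers, then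
any `h` with `h * g * h⁻¹ = g ^ q` is block diagonal. -/
theorem conjugator_block_diagonal
    {A : Type*} [CommRing A] [IsArtinianRing A] [IsLocalRing A]
    {r : ℕ} (n : Fin r → ℕ) (hn : ∀ i, 0 < n i)
    (g : GL ((i : Fin r) × Fin (n i)) A)
    (hblock : ∀ x y : (i : Fin r) × Fin (n i), x.1 ≠ y.1 →
      (g : Matrix ((i : Fin r) × Fin (n i)) ((i : Fin r) × Fin (n i)) A) x y = 0)
    (hcoprime : ∀ i j : Fin r, i ≠ j →
      IsCoprime
        (Matrix.charpoly (Matrix.of fun a b : Fin (n i) =>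
          residue A ((g : Matrix ((i : Fin r) × Fin (n i)) ((i : Fin r) × Fin (n i)) A) ⟨i, a⟩ ⟨i, b⟩)))
        (Matrix.charpoly (Matrix.of fun a b : Fin (n j) =>
          residue A ((g : Matrix ((i : Fin r) × Fin (n i)) ((i : Fin r) × Fin (n i)) A) ⟨j, a⟩ ⟨j, b⟩))))
    (q : ℕ) (hq : 0 < q)
    (hqfix : ∀ i : Fin r,
      Matrix.charpoly ((Matrix.of fun a b : Fin (n i) =>
        residue A ((g : Matrix ((i : Fin r) × Fin (n i)) ((i : Fin r) × Fin (n i)) A) ⟨i, a⟩ ⟨i, b⟩)) ^ q)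
      = Matrix.charpoly (Matrix.of fun a b : Fin (n i) =>
          residue A ((g : Matrix ((i : Fin r) × Fin (n i)) ((i : Fin r) × Fin (n i)) A) ⟨i, a⟩ ⟨i, b⟩)))
    (h : GL ((i : Fin r) × Fin (n i)) A)
    (hconj : h * g * h⁻¹ = g ^ q) :
    ∀ x y : (i : Fin r) × Fin (n i), x.1 ≠ y.1 →
      (h : Matrix ((i : Fin r) × Fin (n i)) ((i : Fin r) × Fin (n i)) A) x y = 0 := by
  classical
  set G : ∀ i, Matrix (Fin (n i)) (Fin (n i)) A :=
    fun i => Matrix.of fun a b =>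
      (g : Matrix ((i : Fin r) × Fin (n i)) ((i : Fin r) × Fin (n i)) A) ⟨i, a⟩ ⟨i, b⟩ with hGdef
  have hgbd : (g : Matrix ((i : Fin r) × Fin (n i)) ((i : Fin r) × Fin (n i)) A)
      = Matrix.blockDiagonal' G := by
    ext ⟨i, a⟩ ⟨j, b⟩
    rcases eq_or_ne i j with rfl | hij
    · rw [Matrix.blockDiagonal'_apply_eq]; rfl
    · rw [Matrix.blockDiagonal'_apply_ne _ _ _ hij]; exact hblock _ _ hij
  -- the intertwining relation on matrices
  have hmul : (h : Matrix ((i : Fin r) × Fin (n i)) ((i : Fin r) × Fin (n i)) A)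
      * Matrix.blockDiagonal' G
      = Matrix.blockDiagonal' (fun i => G i ^ q)
      * (h : Matrix ((i : Fin r) × Fin (n i)) ((i : Fin r) × Fin (n i)) A) := by
    have h1 : h * g = g ^ q * h := mul_inv_eq_iff_eq_mul.mp hconj
    have h2 := congrArg Units.val h1
    simp only [Units.val_mul, Units.val_pow_eq_pow_val] at h2
    have h3 : (Matrix.blockDiagonal' G) ^ q = Matrix.blockDiagonal' (fun i => G i ^ q) :=
      (map_pow (Matrix.blockDiagonal'RingHom (fun i => Fin (n i)) A) G q).symm
    rw [hgbd] at h2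
    rw [h2, h3]
  rintro ⟨i, a⟩ ⟨j, b⟩ hij
  replace hij : i ≠ j := hij
  set Xm : Matrix (Fin (n i)) (Fin (n j)) A :=
    Matrix.of fun a b =>
      (h : Matrix ((i : Fin r) × Fin (n i)) ((i : Fin r) × Fin (n i)) A) ⟨i, a⟩ ⟨j, b⟩ with hXmdef
  have hXB : Xm * G j = (G i) ^ q * Xm := by
    ext a' b'
    have h1 := congrFun (congrFun hmul ⟨i, a'⟩) ⟨j, b'⟩
    have lhs : ((h : Matrix ((i : Fin r) × Fin (n i)) ((i : Fin r) × Fin (n i)) A)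
        * Matrix.blockDiagonal' G) ⟨i, a'⟩ ⟨j, b'⟩ = (Xm * G j) a' b' := by
      rw [Matrix.mul_apply, Matrix.mul_apply, ← Finset.univ_sigma_univ, Finset.sum_sigma]
      rw [Finset.sum_eq_single j]
      · exact Finset.sum_congr rfl fun c _ => by
          rw [Matrix.blockDiagonal'_apply_eq]; rfl
      · intro k _ hkj
        exact Finset.sum_eq_zero fun c _ => by
          rw [Matrix.blockDiagonal'_apply_ne _ _ _ hkj, mul_zero]
      · exact fun hj => absurd (Finset.mem_univ j) hj
    have rhs : (Matrix.blockDiagonal' (fun i => G i ^ q)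
        * (h : Matrix ((i : Fin r) × Fin (n i)) ((i : Fin r) × Fin (n i)) A)) ⟨i, a'⟩ ⟨j, b'⟩
        = ((G i) ^ q * Xm) a' b' := by
      rw [Matrix.mul_apply, Matrix.mul_apply, ← Finset.univ_sigma_univ, Finset.sum_sigma]
      rw [Finset.sum_eq_single i]
      · exact Finset.sum_congr rfl fun c _ => by
          rw [Matrix.blockDiagonal'_apply_eq]; rfl
      · intro k _ hki
        exact Finset.sum_eq_zero fun c _ => by
          rw [show (Matrix.blockDiagonal' (fun i => G i ^ q)) ⟨i, a'⟩ ⟨k, c⟩ = 0 from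
            Matrix.blockDiagonal'_apply_ne _ _ _ (Ne.symm hki), zero_mul]
      · exact fun hi => absurd (Finset.mem_univ i) hi
    rw [lhs, rhs] at h1
    exact h1
  -- Cayley-Hamilton step
  have key := aux_pow_comm' Xm (G j) ((G i) ^ q) hXB (Matrix.charpoly (G j))
  rw [Matrix.aeval_self_charpoly, Matrix.mul_zero] at key
  -- key : 0 = aeval ((G i)^q) (charpoly (G j)) * Xm
  -- the evaluated matrix is a unit
  have hu : IsUnit (aeval ((G i) ^ q) (Matrix.charpoly (G j))) := by
    rw [Matrix.isUnit_iff_isUnit_det _]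
    set d := (aeval ((G i) ^ q) (Matrix.charpoly (G j))).det with hd
    have hres : IsUnit (residue A d) := by
      rw [hd, (residue A).map_det, aux_map_aeval', map_pow, ← Matrix.charpoly_map]
      refine (Matrix.isUnit_iff_isUnit_det _).mp (aux_isUnit' _ _ ?_)
      have hq1 : Matrix.charpoly (((residue A).mapMatrix (G i)) ^ q)
          = Matrix.charpoly ((residue A).mapMatrix (G i)) := hqfix i
      rw [hq1]
      exact hcoprime i j hij
    have hne : residue A d ≠ 0 := hres.ne_zero
    have hnm : d ∉ maximalIdeal A := fun hm => hne (Ideal.Quotient.eq_zero_iff_mem.mpr hm)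
    by_contra hnu
    exact hnm ((IsLocalRing.mem_maximalIdeal _).mpr hnu)
  obtain ⟨u, hu⟩ := hu
  have h0 : (↑u : Matrix (Fin (n i)) (Fin (n i)) A) * Xm = 0 := by rw [hu]; exact key.symm
  have hXm0 : Xm = 0 := by
    calc Xm = ((↑u⁻¹ : Matrix (Fin (n i)) (Fin (n i)) A) * ↑u) * Xm := by
              rw [u.inv_mul, Matrix.one_mul]
      _ = (↑u⁻¹ : Matrix (Fin (n i)) (Fin (n i)) A) * ((↑u : Matrix (Fin (n i)) (Fin (n i)) A) * Xm) := Matrix.mul_assoc _ _ _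
      _ = 0 := by rw [h0, Matrix.mul_zero]
  have := congrFun (congrFun hXm0 a) b
  simpa [hXmdef] using this
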